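/- For every real β with 1/2 ≤ β ≤ 1, one has 2^{h(β)} · 4^{β} · 2^{2β·h((1−β)/(4β))} ≤ 7.871, where h denotes the binary entropy function. -/

import Mathlib

/-- The binary entropy function `h(x) = −x·log₂ x − (1−x)·log₂(1−x)` (with the convention
`h 0 = h 1 = 0`, which the formula satisfies since `Real.logb 2 0 = 0` in Mathlib). -/
noncomputable def binEnt (x : ℝ) : ℝ := -(x * Real.logb 2 x) - (1 - x) * Real.logb 2 (1 - x)

open Real Set

/-- auxiliary function: `(exponent) * log 2` in `Real.log` form. -/
noncomputable def gg (x : ℝ) : ℝ :=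
  x * Real.log x - 3/2 * ((1 - x) * Real.log (1 - x))
    - (5*x - 1)/2 * Real.log (5*x - 1) + 6 * x * Real.log 2

noncomputable def gg' (x : ℝ) : ℝ :=
  Real.log x + 3/2 * Real.log (1 - x) - 5/2 * Real.log (5*x - 1) + 6 * Real.log 2

noncomputable def gg'' (x : ℝ) : ℝ :=
  1/x - (3/2)/(1 - x) - (25/2)/(5*x - 1)

lemma hasDerivAt_gg {x : ℝ} (h1 : 1/2 ≤ x) (h2 : x < 1) : HasDerivAt gg (gg' x) x := by
  have hx0 : x ≠ 0 := by linarith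
  have hx1 : (1:ℝ) - x ≠ 0 := by intro h; nlinarith [h]
  have hx5 : 5*x - 1 ≠ 0 := by intro h; nlinarith [h]
  have hA : HasDerivAt (fun y : ℝ => y * Real.log y) (Real.log x + 1) x := by
    have := (hasDerivAt_id x).fun_mul (Real.hasDerivAt_log hx0)
    refine this.congr_deriv ?_
    simp [hx0]
  have hu : HasDerivAt (fun y : ℝ => 1 - y) (-1 : ℝ) x := by
    simpa using (hasDerivAt_const x (1:ℝ)).fun_sub (hasDerivAt_id x)
  have hl1 : HasDerivAt (fun y : ℝ => Real.log (1 - y)) ((1 - x)⁻¹ * (-1)) x :=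
    (Real.hasDerivAt_log hx1).comp x hu
  have hB : HasDerivAt (fun y : ℝ => (1 - y) * Real.log (1 - y))
      (-(Real.log (1 - x) + 1)) x := by
    have := hu.fun_mul hl1
    refine this.congr_deriv ?_
    field_simp
    ring
  have hv : HasDerivAt (fun y : ℝ => 5*y - 1) (5 : ℝ) x := by
    simpa using ((hasDerivAt_id x).const_mul (5:ℝ)).fun_sub (hasDerivAt_const x (1:ℝ))
  have hlv : HasDerivAt (fun y : ℝ => Real.log (5*y - 1)) ((5*x - 1)⁻¹ * 5) x :=
    by have := (Real.hasDerivAt_log hx5).comp x hv; exact this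
  have hC : HasDerivAt (fun y : ℝ => (5*y - 1)/2 * Real.log (5*y - 1))
      (5/2 * Real.log (5*x - 1) + 5/2) x := by
    have := (hv.div_const 2).fun_mul hlv
    refine this.congr_deriv ?_
    field_simp
  have hD : HasDerivAt (fun y : ℝ => 6 * y * Real.log 2) (6 * 1 * Real.log 2) x :=
    ((hasDerivAt_id x).const_mul (6:ℝ)).mul_const (Real.log 2)
  have := ((hA.fun_sub (hB.const_mul (3/2))).fun_sub hC).fun_add hD
  refine this.congr_deriv ?_
  unfold gg' ; ring

lemma hasDerivAt_gg' {x : ℝ} (h1 : 1/2 ≤ x) (h2 : x < 1) : HasDerivAt gg' (gg'' x) x := by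
  have hx0 : x ≠ 0 := by linarith
  have hx1 : (1:ℝ) - x ≠ 0 := by intro h; nlinarith [h]
  have hx5 : 5*x - 1 ≠ 0 := by intro h; nlinarith [h]
  have hu : HasDerivAt (fun y : ℝ => 1 - y) (-1 : ℝ) x := by
    simpa using (hasDerivAt_const x (1:ℝ)).fun_sub (hasDerivAt_id x)
  have hv : HasDerivAt (fun y : ℝ => 5*y - 1) (5 : ℝ) x := by
    simpa using ((hasDerivAt_id x).const_mul (5:ℝ)).fun_sub (hasDerivAt_const x (1:ℝ))
  have h1' : HasDerivAt (fun y : ℝ => Real.log y) x⁻¹ x := Real.hasDerivAt_log hx0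
  have h2' : HasDerivAt (fun y : ℝ => Real.log (1 - y)) ((1 - x)⁻¹ * (-1)) x :=
    (Real.hasDerivAt_log hx1).comp x hu
  have h3' : HasDerivAt (fun y : ℝ => Real.log (5*y - 1)) ((5*x - 1)⁻¹ * 5) x :=
    by have := (Real.hasDerivAt_log hx5).comp x hv; exact this
  have := ((h1'.fun_add (h2'.const_mul (3/2))).fun_sub (h3'.const_mul (5/2))).fun_add
    (hasDerivAt_const x (6 * Real.log 2))
  refine this.congr_deriv ?_
  unfold gg''
  field_simp
  ring

lemma gg''_neg {x : ℝ} (h1 : 1/2 ≤ x) (h2 : x < 1) : gg'' x < 0 := by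
  unfold gg''
  have hx0 : (0:ℝ) < x := by linarith
  have hx1 : (0:ℝ) < 1 - x := by linarith
  have hx5 : (0:ℝ) < 5*x - 1 := by linarith
  have e1 : 1/x ≤ 2 := by rw [div_le_iff₀ hx0]; linarith
  have e2 : (0:ℝ) < (3/2)/(1-x) := by positivity
  have e3 : (25/8 : ℝ) ≤ (25/2)/(5*x-1) := by
    rw [le_div_iff₀ hx5]; linarith
  linarith

/-- tangent-line bound at `β₀ = 33257/50000` from concavity, via two mean value theorems. -/
lemma gg_tangent {β : ℝ} (h1 : 1/2 ≤ β) (h2 : β < 1) :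
    gg β ≤ gg (33257/50000) + gg' (33257/50000) * (β - 33257/50000) := by
  set b0 : ℝ := 33257/50000 with hb0
  have hb01 : (1:ℝ)/2 ≤ b0 := by norm_num [hb0]
  have hb02 : b0 < 1 := by norm_num [hb0]
  rcases lt_trichotomy β b0 with hlt | heq | hgt
  · -- β < b0
    obtain ⟨ξ, hξ, hslope⟩ := exists_hasDerivAt_eq_slope gg gg' hlt
      (fun y hy => (hasDerivAt_gg (le_trans h1 hy.1) (lt_of_le_of_lt hy.2 hb02)).continuousAt.continuousWithinAt)
      (fun y hy => hasDerivAt_gg (le_trans h1 hy.1.le) (lt_trans hy.2 hb02))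
    -- gg' ξ ≥ gg' b0 :
    obtain ⟨η, hη, hslope2⟩ := exists_hasDerivAt_eq_slope gg' gg'' hξ.2
      (fun y hy => (hasDerivAt_gg' (le_trans h1 (le_trans hξ.1.le hy.1))
        (lt_of_le_of_lt hy.2 hb02)).continuousAt.continuousWithinAt)
      (fun y hy => hasDerivAt_gg' (le_trans h1 (le_trans hξ.1.le hy.1.le)) (lt_trans hy.2 hb02))
    have hηneg : gg'' η < 0 := gg''_neg (le_trans h1 (le_trans hξ.1.le hη.1.le)) (lt_trans hη.2 hb02)
    have hd1 : (0:ℝ) < b0 - ξ := by linarith [hξ.2]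
    have hd2 : (0:ℝ) < b0 - β := by linarith
    rw [eq_div_iff hd1.ne'] at hslope2
    rw [eq_div_iff hd2.ne'] at hslope
    have hmono : gg' b0 ≤ gg' ξ := by
      have := mul_neg_of_neg_of_pos hηneg hd1
      linarith
    have hmul := mul_le_mul_of_nonneg_right hmono hd2.le
    have hexp : gg' b0 * (β - b0) = -(gg' b0 * (b0 - β)) := by ring
    linarith
  · rw [heq]; simp
  · -- b0 < β
    obtain ⟨ξ, hξ, hslope⟩ := exists_hasDerivAt_eq_slope gg gg' hgt
      (fun y hy => (hasDerivAt_gg (le_trans hb01 hy.1) (lt_of_le_of_lt hy.2 h2)).continuousAt.continuousWithinAt)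
      (fun y hy => hasDerivAt_gg (le_trans hb01 hy.1.le) (lt_trans hy.2 h2))
    obtain ⟨η, hη, hslope2⟩ := exists_hasDerivAt_eq_slope gg' gg'' hξ.1
      (fun y hy => (hasDerivAt_gg' (le_trans hb01 hy.1)
        (lt_of_lt_of_le (lt_of_le_of_lt hy.2 hξ.2) h2.le)).continuousAt.continuousWithinAt)
      (fun y hy => hasDerivAt_gg' (le_trans hb01 hy.1.le) (lt_trans (lt_trans hy.2 hξ.2) h2))
    have hηneg : gg'' η < 0 := gg''_neg (le_trans hb01 hη.1.le) (lt_trans (lt_trans hη.2 hξ.2) h2)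
    have hd1 : (0:ℝ) < ξ - b0 := by linarith [hξ.1]
    have hd2 : (0:ℝ) < β - b0 := by linarith
    rw [eq_div_iff hd1.ne'] at hslope2
    rw [eq_div_iff hd2.ne'] at hslope
    have hmono : gg' ξ ≤ gg' b0 := by
      have := mul_neg_of_neg_of_pos hηneg hd1
      linarith
    have hmul := mul_le_mul_of_nonneg_right hmono hd2.le
    linarith

/-- rigorous bounds on `log` of a positive real via `log x ≤ x - 1`. -/
lemma log_window {r : ℝ} (hr : 0 < r) : 1 - r⁻¹ ≤ Real.log r ∧ Real.log r ≤ r - 1 := by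
  constructor
  · have := Real.log_le_sub_one_of_pos (inv_pos.mpr hr)
    rw [Real.log_inv] at this
    linarith
  · exact Real.log_le_sub_one_of_pos hr

lemma logq1_bounds :
    (-204879593/500000000000 : ℝ) ≤ 17 * Real.log (33257/50000) + 10 * Real.log 2 ∧
    17 * Real.log (33257/50000) + 10 * Real.log 2 ≤ (-409591351/1000000000000 : ℝ) := by
  have e : 17 * Real.log (33257/50000) + 10 * Real.log 2
      = Real.log (((33257/50000 : ℝ))^(17:ℕ) * (2:ℝ)^(10:ℕ)) := by
    rw [Real.log_mul (by positivity) (by positivity), Real.log_pow, Real.log_pow]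
    push_cast; ring
  have hw := log_window (r := ((33257/50000 : ℝ))^(17:ℕ) * (2:ℝ)^(10:ℕ)) (by positivity)
  constructor
  · rw [e]
    refine le_trans ?_ hw.1
    norm_num
  · rw [e]
    refine le_trans hw.2 ?_
    norm_num

lemma logq2_bounds :
    (-3272520851/1000000000000 : ℝ) ≤ 83 * Real.log (16743/50000) + 131 * Real.log 2 ∧
    83 * Real.log (16743/50000) + 131 * Real.log 2 ≤ (-3261846389/1000000000000 : ℝ) := by
  have e : 83 * Real.log (16743/50000) + 131 * Real.log 2
      = Real.log (((16743/50000 : ℝ))^(83:ℕ) * (2:ℝ)^(131:ℕ)) := by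
    rw [Real.log_mul (by positivity) (by positivity), Real.log_pow, Real.log_pow]
    push_cast; ring
  have hw := log_window (r := ((16743/50000 : ℝ))^(83:ℕ) * (2:ℝ)^(131:ℕ)) (by positivity)
  constructor
  · rw [e]
    refine le_trans ?_ hw.1
    norm_num
  · rw [e]
    refine le_trans hw.2 ?_
    norm_num

lemma logq3_bounds :
    (870804963/200000000000 : ℝ) ≤ 23 * Real.log (23257/10000) - 28 * Real.log 2 ∧
    23 * Real.log (23257/10000) - 28 * Real.log 2 ≤ (17492261/4000000000 : ℝ) := by
  have e : 23 * Real.log (23257/10000) - 28 * Real.log 2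
      = Real.log (((23257/10000 : ℝ))^(23:ℕ) / (2:ℝ)^(28:ℕ)) := by
    conv_rhs => rw [Real.log_div (by positivity) (by positivity), Real.log_pow, Real.log_pow]
    push_cast; ring
  have hw := log_window (r := ((23257/10000 : ℝ))^(23:ℕ) / (2:ℝ)^(28:ℕ)) (by positivity)
  constructor
  · rw [e]
    refine le_trans ?_ hw.1
    norm_num
  · rw [e]
    refine le_trans hw.2 ?_
    norm_num

lemma logq4_bounds :
    (2244172051/500000000000 : ℝ) ≤ 85 * Real.log (7871/1000) - 253 * Real.log 2 ∧
    85 * Real.log (7871/1000) - 253 * Real.log 2 ≤ (2254290081/500000000000 : ℝ) := by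
  have e : 85 * Real.log (7871/1000) - 253 * Real.log 2
      = Real.log (((7871/1000 : ℝ))^(85:ℕ) / (2:ℝ)^(253:ℕ)) := by
    conv_rhs => rw [Real.log_div (by positivity) (by positivity), Real.log_pow, Real.log_pow]
    push_cast; ring
  have hw := log_window (r := ((7871/1000 : ℝ))^(85:ℕ) / (2:ℝ)^(253:ℕ)) (by positivity)
  constructor
  · rw [e]
    refine le_trans ?_ hw.1
    norm_num
  · rw [e]
    refine le_trans hw.2 ?_
    norm_num

lemma gg_le_target {β : ℝ} (h1 : 1/2 ≤ β) (h2 : β < 1) : gg β ≤ Real.log (7871/1000) := by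
  have ht := gg_tangent h1 h2
  have hq1 := logq1_bounds
  have hq2 := logq2_bounds
  have hq3 := logq3_bounds
  have hq4 := logq4_bounds
  have hl2a := Real.log_two_gt_d9
  have hl2b := Real.log_two_lt_d9
  have hgb0 : gg (33257/50000) = (33257/50000) * Real.log (33257/50000)
      - 3/2 * ((16743/50000) * Real.log (16743/50000))
      - (23257/20000) * Real.log (23257/10000) + 6 * (33257/50000) * Real.log 2 := by
    unfold gg
    norm_num
  have hgb0' : gg' (33257/50000) = Real.log (33257/50000) + 3/2 * Real.log (16743/50000)
      - 5/2 * Real.log (23257/10000) + 6 * Real.log 2 := by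
    unfold gg'
    norm_num
  rw [hgb0, hgb0'] at ht
  rcases le_or_gt β (33257/50000) with hc | hc
  · -- left side: derivative at b0 is nonneg, β - b0 ≤ 0
    have hder0 : (0:ℝ) ≤ Real.log (33257/50000) + 3/2 * Real.log (16743/50000)
        - 5/2 * Real.log (23257/10000) + 6 * Real.log 2 := by
      norm_num at hl2a hl2b ⊢
      linarith [hq1.1, hq2.1, hq3.2]
    have hprod : (Real.log (33257/50000) + 3/2 * Real.log (16743/50000)
        - 5/2 * Real.log (23257/10000) + 6 * Real.log 2) * (β - 33257/50000) ≤ 0 :=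
      mul_nonpos_of_nonneg_of_nonpos hder0 (by linarith)
    norm_num at hl2a hl2b
    linarith [hq1.1, hq1.2, hq2.1, hq2.2, hq3.1, hq3.2, hq4.1, hprod, ht]
  · -- right side: derivative at b0 is ≤ 97/10^7, β - b0 ≤ 16743/50000
    have hderU : Real.log (33257/50000) + 3/2 * Real.log (16743/50000)
        - 5/2 * Real.log (23257/10000) + 6 * Real.log 2 ≤ 97/10000000 := by
      norm_num at hl2a hl2b ⊢
      linarith [hq1.2, hq2.2, hq3.1]
    have hd : (0:ℝ) ≤ β - 33257/50000 := by linarith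
    have hprod : (Real.log (33257/50000) + 3/2 * Real.log (16743/50000)
        - 5/2 * Real.log (23257/10000) + 6 * Real.log 2) * (β - 33257/50000)
        ≤ (97/10000000) * (16743/50000) := by
      calc _ ≤ (97/10000000) * (β - 33257/50000) := mul_le_mul_of_nonneg_right hderU hd
        _ ≤ _ := by nlinarith
    norm_num at hl2a hl2b
    linarith [hq1.1, hq1.2, hq2.1, hq2.2, hq3.1, hq3.2, hq4.1, hprod, ht]

/-- the exponent identity, valid for `1/2 ≤ β < 1`. -/
lemma exponent_eq {β : ℝ} (h1 : 1/2 ≤ β) (h2 : β < 1) :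
    (binEnt β + 2*β + 2*β * binEnt ((1 - β)/(4*β))) * Real.log 2 = gg β := by
  have hβ0 : (0:ℝ) < β := by linarith
  have hβ1 : (0:ℝ) < 1 - β := by linarith
  have hβ5 : (0:ℝ) < 5*β - 1 := by linarith
  have hL : Real.log 2 ≠ 0 := (Real.log_pos (by norm_num)).ne'
  have h4 : Real.log 4 = 2 * Real.log 2 := by
    rw [show (4:ℝ) = 2^(2:ℕ) by norm_num, Real.log_pow]; push_cast; ring
  have e0 : (1:ℝ) - (1 - β)/(4*β) = (5*β - 1)/(4*β) := by
    field_simp; ring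
  have e1 : Real.log ((1 - β)/(4*β)) = Real.log (1 - β) - 2 * Real.log 2 - Real.log β := by
    rw [Real.log_div hβ1.ne' (by positivity), Real.log_mul (by norm_num) hβ0.ne', h4]
    ring
  have e2 : Real.log ((5*β - 1)/(4*β)) = Real.log (5*β - 1) - 2 * Real.log 2 - Real.log β := by
    rw [Real.log_div hβ5.ne' (by positivity), Real.log_mul (by norm_num) hβ0.ne', h4]
    ring
  unfold binEnt gg
  simp only [Real.logb]
  rw [e0, e1, e2]
  field_simp
  ring

theorem entropy_bound_upper_range (β : ℝ) (h1 : 1 / 2 ≤ β) (h2 : β ≤ 1) :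
    (2 : ℝ) ^ (binEnt β) * (4 : ℝ) ^ β *
      (2 : ℝ) ^ (2 * β * binEnt ((1 - β) / (4 * β))) ≤ 7.871 := by
  rcases eq_or_lt_of_le h2 with heq | hlt
  · subst heq
    have hb1 : binEnt 1 = 0 := by
      unfold binEnt
      simp
    have hz : ((1:ℝ) - 1)/(4*1) = 0 := by norm_num
    have hb0 : binEnt (((1:ℝ) - 1)/(4*1)) = 0 := by
      rw [hz]
      unfold binEnt
      simp
    rw [hb1, hb0]
    norm_num [Real.rpow_one]
  · -- main case
    have h20 : (0:ℝ) < 2 := by norm_num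
    have h4 : (4:ℝ)^β = (2:ℝ)^(2*β) := by
      rw [show (4:ℝ) = (2:ℝ)^(2:ℝ) by
        rw [show (2:ℝ) = ((2:ℕ):ℝ) by norm_num, Real.rpow_natCast]; norm_num]
      rw [← Real.rpow_mul (by norm_num)]
    rw [h4, ← Real.rpow_add h20, ← Real.rpow_add h20]
    have key : binEnt β + 2*β + 2*β * binEnt ((1 - β)/(4*β)) ≤ Real.logb 2 (7871/1000) := by
      rw [Real.logb, le_div_iff₀ (by
        have := Real.log_two_gt_d9; norm_num at this ⊢; linarith)]
      rw [exponent_eq h1 hlt]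
      exact gg_le_target h1 hlt
    calc (2:ℝ) ^ (binEnt β + 2*β + 2*β * binEnt ((1 - β)/(4*β)))
        ≤ (2:ℝ) ^ (Real.logb 2 (7871/1000)) :=
          Real.rpow_le_rpow_of_exponent_le (by norm_num) key
      _ = 7871/1000 := Real.rpow_logb (by norm_num) (by norm_num) (by norm_num)
      _ = 7.871 := by norm_num
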